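/- Let k > 0 and r₀ > 0. Let u^s : ℝ³ → ℂ be continuous on {y : ‖y‖ ≥ r₀} and let u^∞ : S² → ℂ be continuous on the unit sphere S² = {d ∈ ℝ³ : ‖d‖ = 1}, and suppose there exists C₀ ≥ 0 such that |r·exp(−𝐢kr)·u^s(r·d) − u^∞(d)| ≤ C₀/r for all unit vectors d and all r ≥ r₀ (the far-field asymptotic of the scattered field). For R > 0 define the near-field index function Φ^R(x) = | ∫_{S_R} u^s(y)·exp(𝐢k‖x−y‖)/(4π‖x−y‖) dσ_R(y) |, where S_R is the sphere of radius R centered at the origin with surface measure σ_R, and define the far-field index function Φ^∞(x) = | (1/(4π)) ∫_{S²} u^∞(d)·exp(−𝐢k⟪x,d⟫) dσ₁(d) |, where σ₁ is the surface measure on the unit sphere. Then for every fixed x ∈ ℝ³ there exists a constant C (depending on x, k, C₀, u^∞ but not on R) such that |Φ^R(x) − Φ^∞(x)| ≤ C/R for all R ≥ max(r₀, 2‖x‖). In particular, the near-field index function converges to the far-field index function as the measurement radius R tends to infinity. -/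

import Mathlib

set_option maxHeartbeats 800000


open MeasureTheory Metric Complex
open scoped RealInnerProductSpace

noncomputable section

/-- The 2-dimensional surface measure on the sphere of radius `R` centered at the origin
in `ℝ³ = EuclideanSpace ℝ (Fin 3)`, realized as a measure on the ambient space supported on
the sphere: the pushforward of the canonical unit-sphere measure `volume.toSphere`
under the scaling `y ↦ R • y`, rescaled by the factor `R ^ 2` (so its total mass is `4πR²`). -/
def sphereSurfaceMeasure (R : ℝ) : Measure (EuclideanSpace ℝ (Fin 3)) :=
  ENNReal.ofReal (R ^ 2) •
    Measure.map (fun y => R • y)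
      (Measure.map Subtype.val
        ((volume : Measure (EuclideanSpace ℝ (Fin 3))).toSphere))

/-- The complex conjugate of the Helmholtz Green's function,
`conj G(x,y) = exp(𝐢 k ‖x - y‖) / (4 π ‖x - y‖)`. -/
def conjG (k : ℝ) (x y : EuclideanSpace ℝ (Fin 3)) : ℂ :=
  Complex.exp (Complex.I * (k : ℂ) * (‖x - y‖ : ℂ)) / (4 * (Real.pi : ℂ) * (‖x - y‖ : ℂ))

local notation "E3" => EuclideanSpace ℝ (Fin 3)

lemma integral_sphereSurfaceMeasure {R : ℝ} (hR : R ≠ 0) (F : E3 → ℂ) :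
    ∫ y, F y ∂(sphereSurfaceMeasure R)
      = (R^2 : ℝ) • ∫ d : sphere (0:E3) 1, F (R • (d:E3))
          ∂((volume : Measure E3).toSphere) := by
  have h1 : MeasurableEmbedding (fun y : E3 => R • y) :=
    (Homeomorph.smulOfNeZero R hR).measurableEmbedding
  have h2 : MeasurableEmbedding (Subtype.val : sphere (0:E3) 1 → E3) :=
    MeasurableEmbedding.subtype_coe (isClosed_sphere.measurableSet)
  rw [sphereSurfaceMeasure, integral_smul_measure, ENNReal.toReal_ofReal (sq_nonneg R),
    h1.integral_map, h2.integral_map]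

lemma norm_exp_I_mul_real (k c : ℝ) : ‖Complex.exp (Complex.I * (k:ℂ) * (c:ℂ))‖ = 1 := by
  rw [Complex.norm_exp]
  simp

lemma norm_exp_I_mul_sub (a b : ℝ) :
    ‖Complex.exp (Complex.I * (a:ℂ)) - Complex.exp (Complex.I * (b:ℂ))‖ ≤ |a - b| := by
  have hd : ∀ t : ℝ, HasDerivAt (fun s : ℝ => Complex.exp (Complex.I * (s:ℂ)))
      (Complex.I * Complex.exp (Complex.I * (t:ℂ))) t := by
    intro t
    have h1 : HasDerivAt (fun z : ℂ => Complex.exp (Complex.I * z))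
        (Complex.exp (Complex.I * (t:ℂ)) * Complex.I) (t:ℂ) := by
      simpa [Function.comp_def] using (Complex.hasDerivAt_exp (Complex.I * t)).comp (t:ℂ)
        ((hasDerivAt_id (t:ℂ)).const_mul Complex.I)
    simpa [mul_comm] using h1.comp_ofReal
  have := Convex.norm_image_sub_le_of_norm_hasDerivWithin_le
    (f := fun s : ℝ => Complex.exp (Complex.I * (s:ℂ)))
    (f' := fun t : ℝ => Complex.I * Complex.exp (Complex.I * (t:ℂ)))
    (fun t _ => (hd t).hasDerivWithinAt) (C := 1)
    (fun t _ => by simp [Complex.norm_exp])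
    convex_univ (Set.mem_univ b) (Set.mem_univ a)
  simpa [Real.norm_eq_abs] using this

lemma norm_exp_I_mul_sub' (k a b : ℝ) :
    ‖Complex.exp (Complex.I * (k:ℂ) * (a:ℂ)) - Complex.exp (Complex.I * (k:ℂ) * (b:ℂ))‖
      ≤ |k| * |a - b| := by
  have := norm_exp_I_mul_sub (k*a) (k*b)
  rw [show |k*a - k*b| = |k| * |a-b| by rw [← abs_mul]; ring_nf] at this
  simpa [Complex.ofReal_mul, mul_assoc] using this

lemma key_est (k C₀ M : ℝ) (hk : 0 < k) (hC₀ : 0 ≤ C₀) (hM : 0 ≤ M)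
    (x d : E3) (hd : ‖d‖ = 1) (R : ℝ) (hRpos : 0 < R) (hxR : 2 * ‖x‖ ≤ R)
    (uS u : ℂ)
    (hA : ‖(R:ℂ) * Complex.exp (-(Complex.I * (k:ℂ) * (R:ℂ))) * uS - u‖ ≤ C₀ / R)
    (hu : ‖u‖ ≤ M) :
    ‖(R^2 : ℝ) • (uS * conjG k x (R • d))
        - Complex.exp (Complex.I * (k:ℂ) * ((2*R : ℝ):ℂ)) *
          ((1 / (4 * (Real.pi:ℂ))) * (u * Complex.exp (-(Complex.I * (k:ℂ) * ((⟪x, d⟫ : ℝ):ℂ)))))‖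
      ≤ ((2*C₀ + M*(4*‖x‖ + 2*k*‖x‖^2)) / (4*Real.pi)) / R := by
  have hπ : (0:ℝ) < Real.pi := Real.pi_pos
  set t : ℝ := ⟪x, d⟫ with ht_def
  set ρ : ℝ := ‖x - R • d‖ with hρ_def
  have hnx : ‖x‖ ≤ R/2 := by linarith
  have hRd : ‖R • d‖ = R := by rw [norm_smul, hd, Real.norm_eq_abs, abs_of_pos hRpos, mul_one]
  have hρ_ge : R/2 ≤ ρ := by
    have h1 : ‖R • d‖ - ‖x‖ ≤ ‖R • d - x‖ := norm_sub_norm_le _ _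
    rw [norm_sub_rev] at h1
    rw [hρ_def]; linarith [h1, hRd ▸ h1]
  have hρpos : 0 < ρ := lt_of_lt_of_le (by linarith) hρ_ge
  have ht : |t| ≤ ‖x‖ := by
    have := abs_real_inner_le_norm x d
    rwa [hd, mul_one] at this
  have hsq : ρ^2 = ‖x‖^2 - 2*(R*t) + R^2 := by
    rw [hρ_def, norm_sub_sq_real, real_inner_smul_right, hRd, ht_def]
  have hRt : t ≤ R/2 := le_trans (le_abs_self t) (le_trans ht hnx)
  have hRt' : R/2 ≤ R - t := by linarith
  have ht2 : t^2 ≤ ‖x‖^2 := by nlinarith [abs_nonneg t, _root_.sq_abs t, norm_nonneg x]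
  have hfact : (ρ - (R - t)) * (ρ + (R - t)) = ‖x‖^2 - t^2 := by linear_combination hsq
  have hsum_pos : 0 < ρ + (R - t) := by linarith
  have hkey1 : 0 ≤ ρ - (R - t) := by nlinarith [hfact, ht2, hsum_pos]
  have hkey2 : ρ - (R - t) ≤ 2*‖x‖^2/R := by
    rw [le_div_iff₀ hRpos]
    nlinarith [mul_le_mul_of_nonneg_left (show R ≤ ρ + (R - t) by linarith) hkey1, hfact, ht2]
  have hxx : 2*‖x‖^2/R ≤ ‖x‖ := by
    rw [div_le_iff₀ hRpos]; nlinarith [norm_nonneg x]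
  have hRρ : |R - ρ| ≤ 2*‖x‖ := by
    rw [abs_le]
    constructor
    · linarith [(abs_le.1 ht).1, (abs_le.1 ht).2, hkey2, hxx, hkey1, norm_nonneg x]
    · linarith [(abs_le.1 ht).1, (abs_le.1 ht).2, hkey2, hxx, hkey1, norm_nonneg x]
  -- complex part
  set A : ℂ := (R:ℂ) * Complex.exp (-(Complex.I * (k:ℂ) * (R:ℂ))) * uS with hA_def
  set X : ℂ := Complex.exp (Complex.I * (k:ℂ) * (R:ℂ)) with hX_def
  set Z : ℂ := Complex.exp (Complex.I * (k:ℂ) * (ρ:ℂ)) with hZ_def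
  set W : ℂ := Complex.exp (-(Complex.I * (k:ℂ) * (t:ℂ))) with hW_def
  have e4 : Complex.exp (-(Complex.I * (k:ℂ) * (R:ℂ))) * X = 1 := by
    rw [hX_def, ← Complex.exp_add]; simp
  have hAX : A * X = (R:ℂ) * uS := by
    rw [hA_def]; linear_combination ((R:ℂ) * uS) * e4
  have e1 : Complex.exp (Complex.I * (k:ℂ) * (((R+ρ:ℝ)):ℂ)) = X * Z := by
    rw [hX_def, hZ_def, ← Complex.exp_add]; push_cast; ring_nf
  have e2 : Complex.exp (Complex.I * (k:ℂ) * ((2*R:ℝ):ℂ)) = X * X := by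
    rw [hX_def, ← Complex.exp_add]; push_cast; ring_nf
  have e3 : Complex.exp (Complex.I * (k:ℂ) * ((2*R - t:ℝ):ℂ)) = X * X * W := by
    rw [hX_def, hW_def, ← Complex.exp_add, ← Complex.exp_add]; push_cast; ring_nf
  have hρC : ((ρ:ℝ):ℂ) ≠ 0 := Complex.ofReal_ne_zero.2 (ne_of_gt hρpos)
  have hπC : ((Real.pi:ℝ):ℂ) ≠ 0 := Complex.ofReal_ne_zero.2 (ne_of_gt hπ)
  have hid : (R^2 : ℝ) • (uS * conjG k x (R • d))
        - Complex.exp (Complex.I * (k:ℂ) * ((2*R : ℝ):ℂ)) *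
          ((1 / (4 * (Real.pi:ℂ))) * (u * W))
      = (1 / (4 * (Real.pi:ℂ))) *
          ( (A - u) * (X * Z) * ((R:ℂ)/(ρ:ℂ))
          + u * (X * Z) * ((R:ℂ)/(ρ:ℂ) - 1)
          + u * (X * Z - X * X * W) ) := by
    rw [conjG, ← hρ_def, e2, ← hZ_def]
    rw [Complex.real_smul]
    push_cast
    linear_combination (Z * (R:ℂ) / (4 * (Real.pi:ℂ) * (ρ:ℂ))) * hAX -
      ((R:ℂ)^2 * uS * Z / (2 * (Real.pi:ℂ) * (ρ:ℂ))) * e4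
  rw [hid]
  have hnXZ : ‖X * Z‖ = 1 := by
    rw [← e1, norm_exp_I_mul_real]
  have hnq : ‖(R:ℂ)/(ρ:ℂ)‖ ≤ 2 := by
    rw [norm_div, Complex.norm_real, Complex.norm_real, Real.norm_eq_abs, Real.norm_eq_abs,
      abs_of_pos hRpos, abs_of_pos hρpos, div_le_iff₀ hρpos]
    linarith
  have hnq1 : ‖(R:ℂ)/(ρ:ℂ) - 1‖ ≤ 4*‖x‖/R := by
    have heq : (R:ℂ)/(ρ:ℂ) - 1 = (((R/ρ - 1 : ℝ)):ℂ) := by push_cast; ring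
    rw [heq, Complex.norm_real, Real.norm_eq_abs]
    have h1 : R/ρ - 1 = (R - ρ)/ρ := by field_simp
    rw [h1, abs_div, abs_of_pos hρpos, div_le_div_iff₀ hρpos hRpos]
    nlinarith [hRρ, hρ_ge, norm_nonneg x]
  have hnXZW : ‖X * Z - X * X * W‖ ≤ k * (2*‖x‖^2/R) := by
    rw [← e1, ← e3]
    have := norm_exp_I_mul_sub' k (R+ρ) (2*R - t)
    rw [abs_of_pos hk] at this
    refine le_trans this ?_
    have : |R + ρ - (2*R - t)| = ρ - (R - t) := by
      rw [show R + ρ - (2*R - t) = ρ - (R - t) by ring, _root_.abs_of_nonneg hkey1]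
    rw [this]
    exact mul_le_mul_of_nonneg_left hkey2 (le_of_lt hk)
  calc ‖(1 / (4 * (Real.pi:ℂ))) * ( (A - u) * (X * Z) * ((R:ℂ)/(ρ:ℂ))
          + u * (X * Z) * ((R:ℂ)/(ρ:ℂ) - 1)
          + u * (X * Z - X * X * W) )‖
      = (1/(4*Real.pi)) * ‖(A - u) * (X * Z) * ((R:ℂ)/(ρ:ℂ))
          + u * (X * Z) * ((R:ℂ)/(ρ:ℂ) - 1)
          + u * (X * Z - X * X * W)‖ := by
        rw [norm_mul]
        congr 1
        rw [show (1 / (4 * (Real.pi:ℂ))) = (((1/(4*Real.pi) : ℝ)):ℂ) by push_cast; ring,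
          Complex.norm_real, Real.norm_eq_abs, abs_of_pos (by positivity)]
    _ ≤ (1/(4*Real.pi)) * ((C₀/R) * 1 * 2 + M * 1 * (4*‖x‖/R) + M * (k * (2*‖x‖^2/R))) := by
        refine mul_le_mul_of_nonneg_left ?_ (by positivity)
        refine le_trans (norm_add_le _ _) ?_
        refine add_le_add (le_trans (norm_add_le _ _) (add_le_add ?_ ?_)) ?_
        · rw [norm_mul, norm_mul, hnXZ]
          gcongr
        · rw [norm_mul, norm_mul, hnXZ]
          gcongr
        · rw [norm_mul]
          exact mul_le_mul hu hnXZW (norm_nonneg _) hM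
    _ = ((2*C₀ + M*(4*‖x‖ + 2*k*‖x‖^2)) / (4*Real.pi)) / R := by
        field_simp
        ring

/-- Convergence of the near-field DSM index function to the far-field index function:
if the scattered field `u^s` has the far-field asymptotic
`|r e^{-𝐢kr} u^s(r d) - u^∞(d)| ≤ C₀ / r` for all unit vectors `d` and `r ≥ r₀`, then for
each fixed `x` there is a constant `C` (independent of `R`) with
`|Φ^R(x) - Φ^∞(x)| ≤ C / R` for all `R ≥ max r₀ (2‖x‖)`, where
`Φ^R(x) = |∫_{S_R} u^s(y) conj G(x,y) dσ_R(y)|` and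
`Φ^∞(x) = |(1/(4π)) ∫_{S²} u^∞(d) exp(-𝐢k⟪x,d⟫) dσ₁(d)|`. -/
theorem nearfield_index_tendsto_farfield_index
    (k r₀ : ℝ) (hk : 0 < k) (hr₀ : 0 < r₀)
    (us uinf : EuclideanSpace ℝ (Fin 3) → ℂ)
    (hus : ContinuousOn us {y : EuclideanSpace ℝ (Fin 3) | r₀ ≤ ‖y‖})
    (huinf : ContinuousOn uinf (sphere (0 : EuclideanSpace ℝ (Fin 3)) 1))
    (C₀ : ℝ) (hC₀ : 0 ≤ C₀)
    (hfar : ∀ d : EuclideanSpace ℝ (Fin 3), ‖d‖ = 1 → ∀ r : ℝ, r₀ ≤ r →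
      ‖((r : ℂ) * Complex.exp (-(Complex.I * (k : ℂ) * (r : ℂ))) * us (r • d)
          - uinf d)‖ ≤ C₀ / r)
    (x : EuclideanSpace ℝ (Fin 3)) :
    ∃ C : ℝ, ∀ R : ℝ, max r₀ (2 * ‖x‖) ≤ R →
      |‖(∫ y, us y * conjG k x y ∂(sphereSurfaceMeasure R))‖
          - ‖((1 / (4 * (Real.pi : ℂ))) *
              ∫ d, uinf d * Complex.exp (-(Complex.I * (k : ℂ) * (⟪x, d⟫ : ℂ)))
                ∂(sphereSurfaceMeasure 1))‖|
        ≤ C / R := by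
  obtain ⟨M0, hM0⟩ :=
    (isCompact_sphere (0 : E3) 1).exists_bound_of_continuousOn huinf
  set M : ℝ := max M0 0 with hMdef
  have hM : 0 ≤ M := le_max_right _ _
  have hMb : ∀ d : E3, ‖d‖ = 1 → ‖uinf d‖ ≤ M := fun d hd =>
    le_trans (hM0 d (by simpa [mem_sphere_zero_iff_norm] using hd)) (le_max_left _ _)
  set ν : Measure (sphere (0:E3) 1) := (volume : Measure E3).toSphere with hν
  set V : ℝ := (ν Set.univ).toReal with hV
  set C₁ : ℝ := ((2*C₀ + M*(4*‖x‖ + 2*k*‖x‖^2)) / (4*Real.pi)) with hC₁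
  refine ⟨V * C₁, ?_⟩
  intro R hR
  have hr0R : r₀ ≤ R := le_trans (le_max_left _ _) hR
  have hxR : 2*‖x‖ ≤ R := le_trans (le_max_right _ _) hR
  have hRpos : 0 < R := lt_of_lt_of_le hr₀ hr0R
  rw [integral_sphereSurfaceMeasure (ne_of_gt hRpos), integral_sphereSurfaceMeasure one_ne_zero]
  simp only [one_pow, one_smul]
  rw [← integral_smul, ← integral_const_mul]
  set F : sphere (0:E3) 1 → ℂ :=
    fun d => (R^2:ℝ) • (us (R • (d:E3)) * conjG k x (R • (d:E3))) with hF
  set G : sphere (0:E3) 1 → ℂ :=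
    fun d => (1 / (4 * (Real.pi:ℂ))) *
      (uinf (d:E3) * Complex.exp (-(Complex.I * (k:ℂ) * ((⟪x, (d:E3)⟫ : ℝ):ℂ)))) with hG
  -- continuity and integrability
  have hc1 : Continuous (fun d : sphere (0:E3) 1 => R • (d:E3)) :=
    (continuous_const (y := R)).smul continuous_subtype_val
  have hdnorm : ∀ d : sphere (0:E3) 1, ‖(d:E3)‖ = 1 := fun d =>
    mem_sphere_zero_iff_norm.1 d.2
  have hRd : ∀ d : sphere (0:E3) 1, ‖R • (d:E3)‖ = R := fun d => by
    rw [norm_smul, hdnorm d, Real.norm_eq_abs, abs_of_pos hRpos, mul_one]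
  have hmem : ∀ d : sphere (0:E3) 1, R • (d:E3) ∈ {y : E3 | r₀ ≤ ‖y‖} := fun d => by
    simp only [Set.mem_setOf_eq, hRd d]; exact hr0R
  have hρne : ∀ d : sphere (0:E3) 1, ‖x - R • (d:E3)‖ ≠ 0 := by
    intro d
    have h1 : ‖R • (d:E3)‖ - ‖x‖ ≤ ‖R • (d:E3) - x‖ := norm_sub_norm_le _ _
    rw [norm_sub_rev] at h1
    have : 0 < ‖x - R • (d:E3)‖ := by
      rw [hRd d] at h1; linarith [h1, hxR, norm_nonneg x, hRpos]
    exact ne_of_gt this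
  have hnormcont : Continuous (fun d : sphere (0:E3) 1 => ((‖x - R • (d:E3)‖ : ℝ):ℂ)) :=
    Complex.continuous_ofReal.comp ((continuous_const.sub hc1).norm)
  have hconjGcont : Continuous (fun d : sphere (0:E3) 1 => conjG k x (R • (d:E3))) := by
    simp only [conjG]
    exact (Complex.continuous_exp.comp (continuous_const.mul hnormcont)).div
      (continuous_const.mul hnormcont)
      (fun d => by
        refine mul_ne_zero (by norm_num [Complex.ofReal_ne_zero, Real.pi_ne_zero]) ?_
        exact Complex.ofReal_ne_zero.2 (hρne d))
  have hFcont : Continuous F :=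
    (continuous_const (y := (R^2:ℝ))).smul ((hus.comp_continuous hc1 hmem).mul hconjGcont)
  have hGcont : Continuous G := by
    refine continuous_const.mul (Continuous.mul ?_ ?_)
    · exact huinf.comp_continuous continuous_subtype_val (fun d => d.2)
    · exact Complex.continuous_exp.comp (((continuous_const.mul
        (Complex.continuous_ofReal.comp (Continuous.inner continuous_const
          continuous_subtype_val)))).neg)
  have hFint : Integrable F ν :=
    integrableOn_univ.mp ((hFcont.continuousOn).integrableOn_compact isCompact_univ)
  have hGint : Integrable G ν :=
    integrableOn_univ.mp ((hGcont.continuousOn).integrableOn_compact isCompact_univ)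
  set p : ℂ := Complex.exp (Complex.I * (k:ℂ) * ((2*R : ℝ):ℂ)) with hp_def
  have hp : ‖p‖ = 1 := norm_exp_I_mul_real _ _
  have hbound : ∀ d : sphere (0:E3) 1, ‖F d - p * G d‖ ≤ C₁ / R := by
    intro d
    have hA := hfar (d:E3) (hdnorm d) R hr0R
    exact key_est k C₀ M hk hC₀ hM x (d:E3) (hdnorm d) R hRpos hxR
      (us (R • (d:E3))) (uinf (d:E3)) hA (hMb _ (hdnorm d))
  calc |‖∫ d, F d ∂ν‖ - ‖∫ d, G d ∂ν‖|
      = |‖∫ d, F d ∂ν‖ - ‖p * ∫ d, G d ∂ν‖| := by rw [norm_mul, hp, one_mul]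
    _ ≤ ‖(∫ d, F d ∂ν) - p * ∫ d, G d ∂ν‖ := abs_norm_sub_norm_le _ _
    _ = ‖∫ d, (F d - p * G d) ∂ν‖ := by
        rw [← integral_const_mul, ← integral_sub hFint (hGint.const_mul p)]
    _ ≤ ∫ _, C₁ / R ∂ν :=
        norm_integral_le_of_norm_le (integrable_const _)
          (Filter.Eventually.of_forall hbound)
    _ = V * (C₁ / R) := by rw [integral_const, smul_eq_mul, Measure.real]
    _ = V * C₁ / R := by ring
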